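/- Let n ≥ 1. For θ ∈ ℝ let a_θ = diag(e^{√−1 θ}, 1, …, 1) ∈ U(n) and let F_θ = {v ∈ ℂ^{n²} : (a_θ ⊗ a_θ)·conj(v) = v}, an ℝ-linear subspace of ℂ^{n²} (equivalently, indexing v by pairs (i,j), the condition is e^{√−1 θ(δ_{i1}+δ_{j1})} conj(v_{ij}) = v_{ij} for all i, j). Then: (i) dim_ℝ F_θ = n² for every θ; (ii) there exist continuous maps s₁, …, s_{n²} : ℝ → ℂ^{n²}, each 2π-periodic, such that for every θ ∈ ℝ the vectors s₁(θ), …, s_{n²}(θ) form an ℝ-basis of F_θ. (This says that the rank-n² real vector bundle over the circle with fibers F_θ is trivial; in particular it is orientable.) -/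

import Mathlib

open Kronecker Matrix

/-- The diagonal unitary matrix `a_θ = diag(e^{√-1 θ}, 1, …, 1)`. -/
noncomputable def aTheta (n : ℕ) (θ : ℝ) : Matrix (Fin n) (Fin n) ℂ :=
  Matrix.diagonal (fun i => if (i : ℕ) = 0 then Complex.exp (θ * Complex.I) else 1)

/-- The ℝ-linear subspace `F_θ = {v ∈ ℂ^{n²} : (a_θ ⊗ a_θ)·conj(v) = v}`. -/
noncomputable def Fsub (n : ℕ) (θ : ℝ) : Submodule ℝ ((Fin n × Fin n) → ℂ) where
  carrier := {v | (aTheta n θ ⊗ₖ aTheta n θ).mulVec (fun p => starRingEnd ℂ (v p)) = v}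
  add_mem' := by
    intro a b ha hb
    simp only [Set.mem_setOf_eq] at ha hb ⊢
    have h : (fun p => starRingEnd ℂ ((a + b) p))
        = (fun p => starRingEnd ℂ (a p)) + (fun p => starRingEnd ℂ (b p)) := by
      funext p; simp
    rw [h, Matrix.mulVec_add, ha, hb]
  zero_mem' := by
    simp only [Set.mem_setOf_eq]
    have h : (fun p => starRingEnd ℂ ((0 : (Fin n × Fin n) → ℂ) p))
        = (0 : (Fin n × Fin n) → ℂ) := by funext p; simp
    rw [h, Matrix.mulVec_zero]
  smul_mem' := by
    intro r v hv
    simp only [Set.mem_setOf_eq] at hv ⊢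
    have h : (fun p => starRingEnd ℂ ((r • v) p))
        = r • (fun p => starRingEnd ℂ (v p)) := by
      funext p
      simp [Pi.smul_apply, Complex.real_smul, _root_.map_mul, Complex.conj_ofReal]
    rw [h, Matrix.mulVec_smul, hv]

set_option linter.unreachableTactic false
set_option linter.unusedTactic false

namespace Stmt12Aux

noncomputable def cE (θ : ℝ) : ℂ := Complex.exp (θ * Complex.I)
noncomputable def cf (θ : ℝ) : ℂ := (1 + cE θ) / 2
noncomputable def cg (θ : ℝ) : ℂ := Complex.I * (1 - cE θ) / 2

lemma cE_ne_zero (θ : ℝ) : cE θ ≠ 0 := Complex.exp_ne_zero _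

lemma cE_neg (θ : ℝ) : cE (-θ) = (cE θ)⁻¹ := by
  rw [cE, cE, ← Complex.exp_neg]
  congr 1
  push_cast
  ring

lemma conj_cE (θ : ℝ) : starRingEnd ℂ (cE θ) = cE (-θ) := by
  rw [cE, cE, ← Complex.exp_conj]
  congr 1
  simp only [_root_.map_mul, Complex.conj_ofReal, Complex.conj_I]
  push_cast
  ring

lemma conj_cf (θ : ℝ) : starRingEnd ℂ (cf θ) = cf (-θ) := by
  simp [cf, map_div₀, conj_cE, Complex.conj_ofNat]

lemma conj_cg (θ : ℝ) : starRingEnd ℂ (cg θ) = -cg (-θ) := by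
  simp only [cg, map_div₀, _root_.map_mul, conj_cE, Complex.conj_I, map_sub, _root_.map_one,
    Complex.conj_ofNat]
  ring

lemma cE_per (θ : ℝ) : cE (θ + 2 * Real.pi) = cE θ := by
  rw [cE, cE]
  push_cast
  rw [add_mul, Complex.exp_add, Complex.exp_two_pi_mul_I, mul_one]

@[fun_prop] lemma continuous_cE : Continuous cE := by unfold cE; fun_prop
@[fun_prop] lemma continuous_cf : Continuous cf := by unfold cf; fun_prop
@[fun_prop] lemma continuous_cg : Continuous cg := by unfold cg; fun_prop

/-- The trivializing frame map. -/
noncomputable def Phi (n : ℕ) (θ : ℝ) (v : Fin n × Fin n → ℂ) : Fin n × Fin n → ℂ :=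
  fun q =>
    if (q.1 : ℕ) = 0 then
      if (q.2 : ℕ) = 0 then cE θ * v q
      else cf θ * v q + cg θ * v (q.2, q.1)
    else
      if (q.2 : ℕ) = 0 then cf θ * v q - cg θ * v (q.2, q.1)
      else v q

lemma Phi_Phi (n : ℕ) (θ : ℝ) (v : Fin n × Fin n → ℂ) : Phi n (-θ) (Phi n θ v) = v := by
  funext q
  obtain ⟨i, j⟩ := q
  have hE : cE (-θ) = (cE θ)⁻¹ := cE_neg θ
  have hne : cE θ ≠ 0 := cE_ne_zero θ
  by_cases h1 : (i : ℕ) = 0 <;> by_cases h2 : (j : ℕ) = 0 <;>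
    simp only [Phi, h1, h2, if_true, if_false, ite_true, ite_false] <;>
    simp [h1, h2, cf, cg, hE] <;> field_simp <;> (try ring) <;> (simp only [Complex.I_sq]; ring)

lemma Phi_Phi' (n : ℕ) (θ : ℝ) (v : Fin n × Fin n → ℂ) : Phi n θ (Phi n (-θ) v) = v := by
  have := Phi_Phi n (-θ) v
  rwa [neg_neg] at this

lemma mem_Fsub {n : ℕ} {θ : ℝ} {v : Fin n × Fin n → ℂ} :
    v ∈ Fsub n θ ↔ ∀ q : Fin n × Fin n,
      ((if (q.1 : ℕ) = 0 then cE θ else 1) * (if (q.2 : ℕ) = 0 then cE θ else 1))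
        * starRingEnd ℂ (v q) = v q := by
  change (aTheta n θ ⊗ₖ aTheta n θ).mulVec (fun p => starRingEnd ℂ (v p)) = v ↔ _
  rw [aTheta, diagonal_kronecker_diagonal, funext_iff]
  exact forall_congr' fun q => by rw [mulVec_diagonal]; rfl

lemma Phi_mem {n : ℕ} {θ : ℝ} {v : Fin n × Fin n → ℂ}
    (hv : ∀ q, starRingEnd ℂ (v q) = v q) : Phi n θ v ∈ Fsub n θ := by
  rw [mem_Fsub]
  intro q
  obtain ⟨i, j⟩ := q
  have hE : cE (-θ) = (cE θ)⁻¹ := cE_neg θ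
  have hne : cE θ ≠ 0 := cE_ne_zero θ
  by_cases h1 : (i : ℕ) = 0 <;> by_cases h2 : (j : ℕ) = 0 <;>
    simp only [Phi, h1, h2, if_true, if_false, ite_true, ite_false] <;>
    simp only [map_add, map_sub, _root_.map_mul, conj_cE, conj_cf, conj_cg, hv, _root_.map_one,
      one_mul, mul_one, neg_mul, mul_neg] <;>
    simp [h1, h2, cf, cg, hE] <;>
    field_simp <;> (try ring) <;> (simp only [Complex.I_sq]; ring)

lemma Psi_real {n : ℕ} {θ : ℝ} {v : Fin n × Fin n → ℂ} (hv : v ∈ Fsub n θ) :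
    ∀ q, starRingEnd ℂ (Phi n (-θ) v q) = Phi n (-θ) v q := by
  intro q
  obtain ⟨i, j⟩ := q
  have hq := mem_Fsub.mp hv (i, j)
  have hq' := mem_Fsub.mp hv (j, i)
  have hE : cE (-θ) = (cE θ)⁻¹ := cE_neg θ
  have hne : cE θ ≠ 0 := cE_ne_zero θ
  by_cases h1 : (i : ℕ) = 0 <;> by_cases h2 : (j : ℕ) = 0 <;>
    simp only [h1, h2, if_true, if_false, ite_true, ite_false, one_mul, mul_one] at hq hq'
  · simp only [Phi, h1, h2, ite_true]
    rw [_root_.map_mul, conj_cE, neg_neg]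
    set x := starRingEnd ℂ (v (i, j)) with hx
    rw [← hq, hE]
    field_simp
  · simp only [Phi, h1, h2, ite_true, ite_false]
    rw [map_add, _root_.map_mul, _root_.map_mul, conj_cf, conj_cg, neg_neg]
    set x := starRingEnd ℂ (v (i, j)) with hx
    set y := starRingEnd ℂ (v (j, i)) with hy
    rw [← hq, ← hq']
    simp only [cf, cg, hE]
    field_simp
    ring
  · simp only [Phi, h1, h2, ite_true, ite_false]
    rw [map_sub, _root_.map_mul, _root_.map_mul, conj_cf, conj_cg, neg_neg]
    set x := starRingEnd ℂ (v (i, j)) with hx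
    set y := starRingEnd ℂ (v (j, i)) with hy
    rw [← hq, ← hq']
    simp only [cf, cg, hE]
    field_simp
    ring
  · simp only [Phi, h1, h2, ite_false]
    exact hq

noncomputable def PhiL (n : ℕ) (θ : ℝ) : ((Fin n × Fin n) → ℂ) →ₗ[ℝ] ((Fin n × Fin n) → ℂ) where
  toFun := Phi n θ
  map_add' u w := by
    funext q
    simp only [Phi, Pi.add_apply]
    split_ifs <;> ring
  map_smul' r w := by
    funext q
    simp only [Phi, Pi.smul_apply, RingHom.id_apply, Complex.real_smul]
    split_ifs <;> ring

lemma PhiL_inj (n : ℕ) (θ : ℝ) : Function.Injective (PhiL n θ) :=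
  Function.LeftInverse.injective (g := Phi n (-θ)) (fun v => Phi_Phi n θ v)

lemma single_li (n : ℕ) :
    LinearIndependent ℝ (fun p : Fin n × Fin n => Pi.single p (1 : ℂ)) := by
  have h2 : LinearIndependent ℝ (⇑(Pi.basisFun ℂ (Fin n × Fin n))) :=
    (Pi.basisFun ℂ (Fin n × Fin n)).linearIndependent.restrict_scalars (by
      intro a b hab
      have : (a : ℂ) = (b : ℂ) := by simpa [Complex.real_smul] using hab
      exact_mod_cast this)
  have he : (fun p : Fin n × Fin n => Pi.single p (1 : ℂ))
      = ⇑(Pi.basisFun ℂ (Fin n × Fin n)) := by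
    funext p
    simp
  rw [he]
  exact h2

lemma phi_single_li (n : ℕ) (θ : ℝ) :
    LinearIndependent ℝ (fun p : Fin n × Fin n => Phi n θ (Pi.single p 1)) :=
  (single_li n).map' (PhiL n θ) (LinearMap.ker_eq_bot.mpr (PhiL_inj n θ))

lemma span_eq (n : ℕ) (θ : ℝ) :
    Submodule.span ℝ (Set.range fun p : Fin n × Fin n => Phi n θ (Pi.single p 1))
      = Fsub n θ := by
  apply le_antisymm
  · rw [Submodule.span_le]
    rintro _ ⟨p, rfl⟩
    exact Phi_mem (fun q => by rcases eq_or_ne q p with h | h <;> simp [Pi.single_apply, h])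
  · intro v hv
    have hw := Psi_real hv
    have hv' : v = Phi n θ (Phi n (-θ) v) := (Phi_Phi' n θ v).symm
    have hsum : Phi n (-θ) v
        = ∑ p : Fin n × Fin n, (Phi n (-θ) v p).re • (Pi.single p (1 : ℂ) : Fin n × Fin n → ℂ) := by
      funext q
      rw [Finset.sum_apply, Finset.sum_eq_single q]
      · rw [Pi.smul_apply, Pi.single_eq_same, Complex.real_smul, mul_one]
        exact (Complex.conj_eq_iff_re.mp (hw q)).symm
      · intro p _ hpq
        simp [Pi.single_apply, Ne.symm hpq]
      · simp
    rw [hv', hsum]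
    change PhiL n θ _ ∈ _
    rw [map_sum]
    apply Submodule.sum_mem
    intro p _
    rw [_root_.map_smul]
    exact Submodule.smul_mem _ _ (Submodule.subset_span ⟨p, rfl⟩)

end Stmt12Aux

open Stmt12Aux

/-- (i) `dim_ℝ F_θ = n²` for every `θ`; (ii) there are continuous,
`2π`-periodic maps `s₁, …, s_{n²} : ℝ → ℂ^{n²}` such that for every `θ` the vectors
`s₁(θ), …, s_{n²}(θ)` form an ℝ-basis of `F_θ` (so the rank-`n²` real vector bundle
over the circle with fibers `F_θ` is trivial, in particular orientable). -/
theorem stmt12 (n : ℕ) (hn : 1 ≤ n) :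
    (∀ θ : ℝ, Module.finrank ℝ (Fsub n θ) = n ^ 2) ∧
    ∃ s : Fin (n ^ 2) → ℝ → ((Fin n × Fin n) → ℂ),
      (∀ i, Continuous (s i)) ∧
      (∀ i θ, s i (θ + 2 * Real.pi) = s i θ) ∧
      (∀ θ : ℝ, LinearIndependent ℝ (fun i => s i θ) ∧
        Submodule.span ℝ (Set.range (fun i => s i θ)) = Fsub n θ) := by
  classical
  let idx : Fin (n ^ 2) ≃ Fin n × Fin n := (finCongr (by rw [pow_two])).trans finProdFinEquiv.symm
  let s : Fin (n ^ 2) → ℝ → ((Fin n × Fin n) → ℂ) :=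
    fun i θ => Phi n θ (Pi.single (idx i) 1)
  have hli : ∀ θ, LinearIndependent ℝ (fun i => s i θ) :=
    fun θ => (phi_single_li n θ).comp idx idx.injective
  have hrange : ∀ θ, Set.range (fun i => s i θ)
      = Set.range (fun p : Fin n × Fin n => Phi n θ (Pi.single p 1)) := by
    intro θ
    have h : (fun i => s i θ) = (fun p : Fin n × Fin n => Phi n θ (Pi.single p 1)) ∘ idx := rfl
    rw [h, Set.range_comp, Equiv.range_eq_univ, Set.image_univ]
  have hspan : ∀ θ, Submodule.span ℝ (Set.range (fun i => s i θ)) = Fsub n θ := by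
    intro θ
    rw [hrange θ]
    exact span_eq n θ
  refine ⟨?_, s, ?_, ?_, fun θ => ⟨hli θ, hspan θ⟩⟩
  · intro θ
    have h1 : Module.finrank ℝ ↥(Submodule.span ℝ (Set.range fun i => s i θ))
        = Fintype.card (Fin (n ^ 2)) := finrank_span_eq_card (hli θ)
    rw [hspan θ] at h1
    simpa using h1
  · intro i
    apply continuous_pi
    intro q
    by_cases h1 : (q.1 : ℕ) = 0 <;> by_cases h2 : (q.2 : ℕ) = 0 <;>
      simp only [s, Phi, h1, h2, if_true, if_false, ite_true, ite_false] <;> fun_prop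
  · intro i θ
    funext q
    simp only [s, Phi, cf, cg, cE_per]
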